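/- Consider the sequences produced by Algorithm AGM-EF-1 (as specified in the context). Then for every k ≥ 0 and every x ∈ dom Ψ, q_{k+1}(x) − J(x) ≤ (1 − a_{k+1}) (q_k(x) − J(x)). -/

import Mathlib

noncomputable section

open scoped BigOperators

/-- Bregman divergence induced by `d`. -/
def breg {E : Type*} [NormedAddCommGroup E] [NormedSpace ℝ E]
    (d : E → ℝ) (x y : E) : ℝ :=
  d x - d y - fderiv ℝ d y (x - y)

/-- `d` is `σ`-strongly convex with respect to the norm `‖·‖`. -/
def StrongConvexOnNorm {E : Type*} [NormedAddCommGroup E] [NormedSpace ℝ E]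
    (σ : ℝ) (d : E → ℝ) : Prop :=
  ∀ x y : E, d x ≥ d y + fderiv ℝ d y (x - y) + σ / 2 * ‖x - y‖ ^ 2

/-- `g` is a subgradient of the extended-real-valued function `h` at `y`. -/
def IsSubgradE {E : Type*} [NormedAddCommGroup E] [NormedSpace ℝ E]
    (h : E → EReal) (y : E) (g : E →L[ℝ] ℝ) : Prop :=
  ∀ x, h x ≥ h y + ((g (x - y) : ℝ) : EReal)

/-- `h` is `lam`-strongly convex with respect to `d` (extended-real-valued version). -/
def ScWrtE {E : Type*} [NormedAddCommGroup E] [NormedSpace ℝ E]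
    (d : E → ℝ) (lam : ℝ) (h : E → EReal) : Prop :=
  ∀ y : E, h y ≠ ⊤ → ∀ g : E →L[ℝ] ℝ, IsSubgradE h y g →
    ∀ x, h x ≥ h y + ((g (x - y) + lam * breg d x y : ℝ) : EReal)

/-- `f` is `lam`-strongly convex with respect to `d` (real-valued version). -/
def ScWrtR {E : Type*} [NormedAddCommGroup E] [NormedSpace ℝ E]
    (d : E → ℝ) (lam : ℝ) (f : E → ℝ) : Prop :=
  ∀ y : E, ∀ g : E →L[ℝ] ℝ, (∀ x, f x ≥ f y + g (x - y)) →
    ∀ x, f x ≥ f y + g (x - y) + lam * breg d x y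

/-- Convexity for extended-real-valued functions. -/
def ConvexE {E : Type*} [NormedAddCommGroup E] [NormedSpace ℝ E]
    (h : E → EReal) : Prop :=
  ∀ x y : E, ∀ a b : ℝ, 0 ≤ a → 0 ≤ b → a + b = 1 →
    h (a • x + b • y) ≤ ((a : ℝ) : EReal) * h x + ((b : ℝ) : EReal) * h y

/-- The lower model `ℓ_f(x; y, lam1)`. -/
def ellf {E : Type*} [NormedAddCommGroup E] [NormedSpace ℝ E]
    (d : E → ℝ) (f : E → ℝ) (lam1 : ℝ) (x y : E) : ℝ :=
  f y + fderiv ℝ f y (x - y) + lam1 * breg d x y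



open Filter Topology in
private lemma tendsto_slope_right {E : Type*} [NormedAddCommGroup E] [NormedSpace ℝ E]
    (f : E → ℝ) (z : E) (hf : DifferentiableAt ℝ f z) (v : E) :
    Tendsto (fun t : ℝ => (f (z + t • v) - f z) / t) (𝓝[>] (0:ℝ))
      (𝓝 (fderiv ℝ f z v)) := by
  have hline : HasDerivAt (fun t : ℝ => z + t • v) v 0 := by
    simpa using ((hasDerivAt_id (0:ℝ)).smul_const v).const_add z
  have hcomp : HasDerivAt (fun t : ℝ => f (z + t • v)) (fderiv ℝ f z v) 0 := by
    have hf' : HasFDerivAt f (fderiv ℝ f z) ((fun t : ℝ => z + t • v) 0) := by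
      simpa using hf.hasFDerivAt
    have := hf'.comp_hasDerivAt 0 hline
    exact this
  have := hasDerivAt_iff_tendsto_slope.mp hcomp
  have h2 := this.mono_left (nhdsWithin_mono _ (by intro t ht; exact ne_of_gt ht))
  refine h2.congr' ?_
  filter_upwards [self_mem_nhdsWithin] with t ht
  simp [slope, (show (0:ℝ) < t from ht).ne', div_eq_inv_mul]

open Filter Topology in
private lemma grad_ineq {E : Type*} [NormedAddCommGroup E] [NormedSpace ℝ E]
    (f : E → ℝ) (hconv : ConvexOn ℝ Set.univ f) (hdiff : Differentiable ℝ f)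
    (y x : E) : f y + fderiv ℝ f y (x - y) ≤ f x := by
  have key : ∀ t ∈ Set.Ioo (0:ℝ) 1, (f (y + t • (x - y)) - f y) / t ≤ f x - f y := by
    intro t ht
    have h := hconv.2 (Set.mem_univ x) (Set.mem_univ y) (le_of_lt ht.1)
      (by linarith [ht.2] : (0:ℝ) ≤ 1 - t) (by ring)
    have heq : t • x + (1 - t) • y = y + t • (x - y) := by
      simp [smul_sub, sub_smul]; abel
    rw [heq] at h
    rw [div_le_iff₀ ht.1]
    simp only [smul_eq_mul] at h
    nlinarith [h, ht.1]
  have hlim := tendsto_slope_right f y hdiff.differentiableAt (x - y)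
  have : fderiv ℝ f y (x - y) ≤ f x - f y := by
    refine le_of_tendsto hlim ?_
    filter_upwards [Ioo_mem_nhdsGT_of_mem (by norm_num : (0:ℝ) ∈ Set.Ico (0:ℝ) 1)]
      with t ht using key t ht
  linarith

open Filter Topology in
private lemma ereal_mul_ne_bot (γ : ℝ) (hγ : 0 ≤ γ) (X : EReal) (hX : X ≠ ⊥) :
    (γ : EReal) * X ≠ ⊥ := by
  rcases eq_or_lt_of_le hγ with h | h
  · rw [← h]; simp
  · induction X using EReal.rec with
    | bot => exact absurd rfl hX
    | coe x => rw [← EReal.coe_mul]; exact EReal.coe_ne_bot _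
    | top => rw [EReal.coe_mul_top_of_pos h]; simp

open Filter Topology in
private lemma ereal_add_ne_bot (X Y : EReal) (hX : X ≠ ⊥) (hY : Y ≠ ⊥) : X + Y ≠ ⊥ := by
  simp [EReal.add_eq_bot_iff, hX, hY]

open Filter Topology in
private lemma comb (X : EReal) (hbot : X ≠ ⊥)
    (p ℓ β a p' : ℝ) (hβ : 0 ≤ β) (ha0 : 0 < a) (ha1 : a < 1)
    (hp' : p' = (1 - a) * p + a * ℓ) :
    ((1 - a : ℝ) : EReal) * ((p : EReal) + (β : EReal) * X)
      + ((a : ℝ) : EReal) * ((ℓ : EReal) + X)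
      = (p' : EReal) + (((1 - a) * β + a : ℝ) : EReal) * X := by
  by_cases hT : X = ⊤
  · rw [hT]
    have h1 : (ℓ : EReal) + ⊤ = ⊤ := EReal.add_top_of_ne_bot (EReal.coe_ne_bot _)
    have h2 : ((a : ℝ) : EReal) * ⊤ = ⊤ := EReal.coe_mul_top_of_pos ha0
    have h3 : ((β : ℝ) : EReal) * ⊤ ≠ ⊥ := ereal_mul_ne_bot β hβ ⊤ (by simp)
    have h4 : ((1 - a : ℝ) : EReal) * ((p : EReal) + (β : EReal) * ⊤) ≠ ⊥ :=
      ereal_mul_ne_bot _ (by linarith) _ (ereal_add_ne_bot _ _ (EReal.coe_ne_bot _) h3)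
    rw [h1, h2, EReal.add_top_of_ne_bot h4,
      EReal.coe_mul_top_of_pos (by nlinarith : (0:ℝ) < (1 - a) * β + a),
      EReal.add_top_of_ne_bot (EReal.coe_ne_bot _)]
  · obtain ⟨x, hx⟩ : ∃ x : ℝ, X = (x : EReal) := ⟨X.toReal, (EReal.coe_toReal hT hbot).symm⟩
    rw [hx]
    norm_cast
    rw [hp']; ring

open Filter Topology in
private lemma key_min {E : Type*} [NormedAddCommGroup E] [NormedSpace ℝ E]
    (d : E → ℝ) (hd : Differentiable ℝ d) (lam2 : ℝ)
    (Ψ : E → EReal) (hbot : ∀ x, Ψ x ≠ ⊥) (hconv : ConvexE Ψ) (hsc : ScWrtE d lam2 Ψ)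
    (α β C : ℝ) (hβ : 0 < β) (A : E →L[ℝ] ℝ)
    (z : E) (hzT : Ψ z ≠ ⊤)
    (hmin : ∀ w, ((α * d z + A z + C : ℝ) : EReal) + (β : EReal) * Ψ z
        ≤ ((α * d w + A w + C : ℝ) : EReal) + (β : EReal) * Ψ w)
    (w : E) :
    ((α * d z + A z + C : ℝ) : EReal) + (β : EReal) * Ψ z
        + (((α + β * lam2) * breg d w z : ℝ) : EReal)
      ≤ ((α * d w + A w + C : ℝ) : EReal) + (β : EReal) * Ψ w := by
  obtain ⟨Z, hZ⟩ : ∃ Z : ℝ, Ψ z = (Z : EReal) :=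
    ⟨(Ψ z).toReal, (EReal.coe_toReal hzT (hbot z)).symm⟩
  set g : E →L[ℝ] ℝ := (-β⁻¹) • (α • fderiv ℝ d z + A) with hg
  have hgval : ∀ v, g v = -β⁻¹ * (α * fderiv ℝ d z v + A v) := by
    intro v
    simp [hg, ContinuousLinearMap.add_apply, smul_eq_mul]
    ring
  have hβi : β * β⁻¹ = 1 := mul_inv_cancel₀ (ne_of_gt hβ)
  -- g is a subgradient of Ψ at z
  have hsub : IsSubgradE Ψ z g := by
    intro x
    by_cases hxT : Ψ x = ⊤
    · rw [hxT]; exact le_top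
    obtain ⟨X, hX⟩ : ∃ X : ℝ, Ψ x = (X : EReal) :=
      ⟨(Ψ x).toReal, (EReal.coe_toReal hxT (hbot x)).symm⟩
    rw [hX, hZ]
    have hquot : ∀ t ∈ Set.Ioo (0:ℝ) 1,
        0 ≤ α * ((d (z + t • (x - z)) - d z) / t) + (A (x - z) + β * (X - Z)) := by
      intro t ht
      set zt := z + t • (x - z) with hzt
      have hconvt : Ψ zt ≤ (((1 - t) * Z + t * X : ℝ) : EReal) := by
        have h := hconv z x (1 - t) t (by linarith [ht.2]) (le_of_lt ht.1) (by ring)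
        have heq : (1 - t) • z + t • x = zt := by
          rw [hzt]; module
        rw [heq, hZ, hX] at h
        calc Ψ zt ≤ ((1 - t : ℝ) : EReal) * (Z : EReal) + ((t : ℝ) : EReal) * (X : EReal) := h
        _ = (((1 - t) * Z + t * X : ℝ) : EReal) := by norm_cast
      have hztT : Ψ zt ≠ ⊤ := by
        intro h
        rw [h, top_le_iff] at hconvt
        exact EReal.coe_ne_top _ hconvt
      obtain ⟨P, hP⟩ : ∃ P : ℝ, Ψ zt = (P : EReal) :=
        ⟨(Ψ zt).toReal, (EReal.coe_toReal hztT (hbot zt)).symm⟩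
      have hPle : P ≤ (1 - t) * Z + t * X := by
        rw [hP] at hconvt; exact_mod_cast hconvt
      have hm := hmin zt
      rw [hZ, hP] at hm
      have hm' : α * d z + A z + C + β * Z ≤ α * d zt + A zt + C + β * P := by
        exact_mod_cast hm
      have hAzt : A zt = A z + t * A (x - z) := by
        rw [hzt, map_add, map_smul, smul_eq_mul]
      have ht0 : t ≠ 0 := ne_of_gt ht.1
      have hrw : α * ((d zt - d z) / t) + (A (x - z) + β * (X - Z))
          = (α * (d zt - d z) + t * (A (x - z) + β * (X - Z))) / t := by
        field_simp
      rw [hrw]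
      apply div_nonneg _ (le_of_lt ht.1)
      rw [hAzt] at hm'
      have h8 : 0 ≤ β * (t * (X - Z) - (P - Z)) :=
        mul_nonneg (le_of_lt hβ) (by linarith)
      nlinarith [hm', h8]
    have hlim : 0 ≤ α * fderiv ℝ d z (x - z) + (A (x - z) + β * (X - Z)) := by
      have htend := ((tendsto_slope_right d z (hd z) (x - z)).const_mul α).add_const
        (A (x - z) + β * (X - Z))
      refine ge_of_tendsto htend ?_
      filter_upwards [Ioo_mem_nhdsGT_of_mem (by norm_num : (0:ℝ) ∈ Set.Ico (0:ℝ) 1)]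
        with t ht using hquot t ht
    have hreal : Z + g (x - z) ≤ X := by
      have hbg2 : β * g (x - z) = -(α * fderiv ℝ d z (x - z) + A (x - z)) := by
        rw [hgval]; field_simp
      have h9 : β * (Z + g (x - z)) ≤ β * X := by nlinarith [hbg2, hlim]
      exact le_of_mul_le_mul_left h9 hβ
    exact_mod_cast hreal
  have hs := hsc z hzT g hsub w
  by_cases hwT : Ψ w = ⊤
  · rw [hwT, EReal.coe_mul_top_of_pos hβ, EReal.add_top_of_ne_bot (EReal.coe_ne_bot _)]
    exact le_top
  obtain ⟨W, hW⟩ : ∃ W : ℝ, Ψ w = (W : EReal) :=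
    ⟨(Ψ w).toReal, (EReal.coe_toReal hwT (hbot w)).symm⟩
  rw [hZ, hW] at hs ⊢
  have hsr : Z + (g (w - z) + lam2 * breg d w z) ≤ W := by exact_mod_cast hs
  have hbg : β * g (w - z) = -(α * fderiv ℝ d z (w - z) + A (w - z)) := by
    rw [hgval]; field_simp
  have hAsub : A (w - z) = A w - A z := map_sub A w z
  have h5 : α * breg d w z = α * (d w - d z - fderiv ℝ d z (w - z)) := rfl
  have goal_real : α * d z + A z + C + β * Z + (α + β * lam2) * breg d w z
      ≤ α * d w + A w + C + β * W := by
    have h1 : 0 ≤ W - (Z + (g (w - z) + lam2 * breg d w z)) := by linarith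
    have h2 : 0 ≤ β * (W - (Z + (g (w - z) + lam2 * breg d w z))) :=
      mul_nonneg (le_of_lt hβ) h1
    linarith [h2, hbg, hAsub, h5]
  exact_mod_cast goal_real


/-- geometric decay of the model gap in AGM-EF-1. -/
theorem stmt12 {E : Type*} [NormedAddCommGroup E] [NormedSpace ℝ E] [FiniteDimensional ℝ E]
    (σ lam1 lam2 L : ℝ) (hσ : 0 < σ) (hlam1 : 0 ≤ lam1) (hlam2 : 0 ≤ lam2)
    (hL : σ * lam1 < L)
    (d : E → ℝ) (hddiff : Differentiable ℝ d) (hdconv : ConvexOn ℝ Set.univ d)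
    (hdsc : StrongConvexOnNorm σ d)
    (Ψ : E → EReal) (hΨbot : ∀ x, Ψ x ≠ ⊥) (hΨprop : ∃ x, Ψ x ≠ ⊤)
    (hΨlsc : LowerSemicontinuous Ψ) (hΨconv : ConvexE Ψ) (hΨsc : ScWrtE d lam2 Ψ)
    (f : E → ℝ) (hfconv : ConvexOn ℝ Set.univ f) (hfdiff : Differentiable ℝ f)
    (hfsc : ScWrtR d lam1 f)
    (hfL : ∀ x y : E, ‖fderiv ℝ f x - fderiv ℝ f y‖ ≤ L * ‖x - y‖)
    -- Algorithm AGM-EF-1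
    (x z u : ℕ → E) (a c : ℕ → ℝ) (ψ q : ℕ → E → EReal)
    (hu0 : Ψ (u 0) ≠ ⊤) (hc0 : c 0 = L / σ + lam2)
    (hq0 : ∀ w, q 0 w =
      ((L / σ * breg d w (u 0) + f (u 0) + fderiv ℝ f (u 0) (w - u 0) : ℝ) : EReal) + Ψ w)
    (hx0 : x 0 = z 0) (hz0min : ∀ w, q 0 (z 0) ≤ q 0 w)
    (hamem : ∀ k, a (k + 1) ∈ Set.Ioo (0 : ℝ) 1)
    (haroot : ∀ k, σ * (1 - a (k + 1)) * (c k + lam2 * a (k + 1)) + σ * lam1 * a (k + 1)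
        = L * a (k + 1) ^ 2)
    (hc : ∀ k, c (k + 1) = (1 - a (k + 1)) * c k + (lam1 + lam2) * a (k + 1))
    (hu : ∀ k,
      u (k + 1) =
        ((((1 - a (k + 1)) * c k + lam1 * a (k + 1) + lam2 * a (k + 1) * (1 - a (k + 1)))
            - lam1 * a (k + 1) * a (k + 1))⁻¹) •
          (((((1 - a (k + 1)) * c k + lam1 * a (k + 1) + lam2 * a (k + 1) * (1 - a (k + 1)))
                - ((1 - a (k + 1)) * c k + lam1 * a (k + 1)) * a (k + 1)) • x k)
            + (((1 - a (k + 1)) * c k * a (k + 1)) • z k)))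
    (hψ : ∀ k w, ψ (k + 1) w =
      ((1 - a (k + 1) : ℝ) : EReal) * q k w
        + ((a (k + 1) : ℝ) : EReal) * (((ellf d f lam1 w (u (k + 1)) : ℝ) : EReal) + Ψ w))
    (hz : ∀ k w, ψ (k + 1) (z (k + 1)) ≤ ψ (k + 1) w)
    (hx : ∀ k, x (k + 1) = (1 - a (k + 1)) • x k + a (k + 1) • z (k + 1))
    (hq : ∀ k w, q (k + 1) w =
      ((c (k + 1) * breg d w (z (k + 1)) : ℝ) : EReal) + ψ (k + 1) (z (k + 1)))
    :
    ∀ k : ℕ, ∀ w : E, Ψ w ≠ ⊤ →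
      q (k + 1) w - (((f w : ℝ) : EReal) + Ψ w) ≤
        ((1 - a (k + 1) : ℝ) : EReal) * (q k w - (((f w : ℝ) : EReal) + Ψ w)) := by
  have hL0 : 0 < L := lt_of_le_of_lt (mul_nonneg hσ.le hlam1) hL
  have hLσ : 0 ≤ L / σ := div_nonneg hL0.le hσ.le
  obtain ⟨U0, hU0⟩ : ∃ r : ℝ, Ψ (u 0) = (r : EReal) :=
    ⟨(Ψ (u 0)).toReal, (EReal.coe_toReal hu0 (hΨbot (u 0))).symm⟩
  -- from a canonical representation of `q k`, derive one for `ψ (k+1)`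
  have derive : ∀ (k : ℕ) (α β C : ℝ) (A : E →L[ℝ] ℝ), 0 ≤ α → 0 ≤ β → α + β * lam2 = c k →
      (∀ w, q k w = ((α * d w + A w + C : ℝ) : EReal) + ((β : ℝ) : EReal) * Ψ w) →
      ∃ (α' β' C' : ℝ) (A' : E →L[ℝ] ℝ), 0 ≤ α' ∧ 0 < β' ∧ α' + β' * lam2 = c (k+1) ∧
        (∀ w, ψ (k+1) w = ((α' * d w + A' w + C' : ℝ) : EReal) + ((β' : ℝ) : EReal) * Ψ w) ∧
        (∃ M : ℝ, ψ (k+1) (z (k+1)) = ((M : ℝ) : EReal)) ∧ Ψ (z (k+1)) ≠ ⊤ := by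
    intro k α β C A hα hβ hmodk hrep
    obtain ⟨ha0, ha1⟩ := hamem k
    set aa := a (k + 1) with haa
    set uu := u (k + 1) with huu
    set α' := (1 - aa) * α + aa * lam1 with hα'def
    set β' := (1 - aa) * β + aa with hβ'def
    set C' := (1 - aa) * C + aa * (f uu - fderiv ℝ f uu uu
        - lam1 * (d uu - fderiv ℝ d uu uu)) with hC'def
    set A' := (1 - aa) • A + aa • (fderiv ℝ f uu - lam1 • fderiv ℝ d uu) with hA'def
    have hα' : 0 ≤ α' := add_nonneg (mul_nonneg (by linarith) hα) (mul_nonneg ha0.le hlam1)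
    have hβ' : 0 < β' := by nlinarith
    have hmod' : α' + β' * lam2 = c (k+1) := by rw [hc k, ← hmodk]; ring
    have hrepψ : ∀ w, ψ (k+1) w
        = ((α' * d w + A' w + C' : ℝ) : EReal) + ((β' : ℝ) : EReal) * Ψ w := by
      intro w
      rw [hψ k w, hrep w]
      have heq : α' * d w + A' w + C'
          = (1 - aa) * (α * d w + A w + C) + aa * ellf d f lam1 w uu := by
        simp only [hα'def, hA'def, hC'def, ellf, breg, ContinuousLinearMap.add_apply,
          ContinuousLinearMap.smul_apply, ContinuousLinearMap.sub_apply, map_sub,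
          smul_eq_mul]
        ring
      exact comb (Ψ w) (hΨbot w) (α * d w + A w + C) (ellf d f lam1 w uu) β aa
        (α' * d w + A' w + C') hβ ha0 ha1 heq
    have hψu0 : ψ (k+1) (u 0) = ((α' * d (u 0) + A' (u 0) + C' + β' * U0 : ℝ) : EReal) := by
      rw [hrepψ (u 0), hU0]; norm_cast
    have hztT' : ψ (k+1) (z (k+1)) ≠ ⊤ := by
      intro h
      have h2 := hz k (u 0)
      rw [h, hψu0, top_le_iff] at h2
      exact EReal.coe_ne_top _ h2
    have hΨzT : Ψ (z (k+1)) ≠ ⊤ := by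
      intro h
      apply hztT'
      rw [hrepψ (z (k+1)), h, EReal.coe_mul_top_of_pos hβ',
        EReal.add_top_of_ne_bot (EReal.coe_ne_bot _)]
    have hzbt : ψ (k+1) (z (k+1)) ≠ ⊥ := by
      rw [hrepψ (z (k+1))]
      exact ereal_add_ne_bot _ _ (EReal.coe_ne_bot _)
        (ereal_mul_ne_bot β' hβ'.le _ (hΨbot _))
    exact ⟨α', β', C', A', hα', hβ', hmod', hrepψ,
      ⟨(ψ (k+1) (z (k+1))).toReal, (EReal.coe_toReal hztT' hzbt).symm⟩, hΨzT⟩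
  -- canonical representation of `q k`, by induction
  have inv : ∀ k : ℕ, ∃ (α β C : ℝ) (A : E →L[ℝ] ℝ), 0 ≤ α ∧ 0 ≤ β ∧ α + β * lam2 = c k ∧
      ∀ w, q k w = ((α * d w + A w + C : ℝ) : EReal) + ((β : ℝ) : EReal) * Ψ w := by
    intro k
    induction k with
    | zero =>
      refine ⟨L / σ, 1,
        f (u 0) - fderiv ℝ f (u 0) (u 0) - L / σ * (d (u 0) - fderiv ℝ d (u 0) (u 0)),
        fderiv ℝ f (u 0) - (L / σ) • fderiv ℝ d (u 0), hLσ, zero_le_one,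
        by rw [hc0]; ring, ?_⟩
      intro w
      rw [hq0 w]
      have h1 : ((1 : ℝ) : EReal) * Ψ w = Ψ w := by
        norm_cast
        exact one_mul _
      rw [h1]
      congr 1
      norm_cast
      simp only [breg, ContinuousLinearMap.sub_apply, ContinuousLinearMap.smul_apply,
        map_sub, smul_eq_mul]
      ring
    | succ k ih =>
      obtain ⟨α, β, C, A, hα, hβ, hmodk, hrep⟩ := ih
      obtain ⟨α', β', C', A', hα', hβ', hmod', hrepψ, ⟨M, hM⟩, hΨzT⟩ :=
        derive k α β C A hα hβ hmodk hrep
      refine ⟨c (k+1), 0,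
        M - c (k+1) * (d (z (k+1)) - fderiv ℝ d (z (k+1)) (z (k+1))),
        (-(c (k+1))) • fderiv ℝ d (z (k+1)),
        by rw [← hmod']; exact add_nonneg hα' (mul_nonneg hβ'.le hlam2),
        le_refl 0, by ring, ?_⟩
      intro w
      rw [hq k w, hM]
      have h0 : ((0 : ℝ) : EReal) * Ψ w = 0 := by
        rw [EReal.coe_zero]; exact zero_mul _
      rw [h0, add_zero]
      norm_cast
      simp only [breg, ContinuousLinearMap.smul_apply, map_sub, smul_eq_mul]
      ring
  -- main argument
  intro k w hwT
  obtain ⟨α, β, C, A, hα, hβ, hmodk, hrep⟩ := inv k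
  obtain ⟨α', β', C', A', hα', hβ', hmod', hrepψ, ⟨M, hM⟩, hΨzT⟩ :=
    derive k α β C A hα hβ hmodk hrep
  obtain ⟨ha0, ha1⟩ := hamem k
  obtain ⟨W, hW⟩ : ∃ W : ℝ, Ψ w = (W : EReal) :=
    ⟨(Ψ w).toReal, (EReal.coe_toReal hwT (hΨbot w)).symm⟩
  have hmin' : ∀ w', ((α' * d (z (k+1)) + A' (z (k+1)) + C' : ℝ) : EReal)
      + ((β' : ℝ) : EReal) * Ψ (z (k+1))
      ≤ ((α' * d w' + A' w' + C' : ℝ) : EReal) + ((β' : ℝ) : EReal) * Ψ w' := by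
    intro w'
    rw [← hrepψ (z (k+1)), ← hrepψ w']
    exact hz k w'
  have hkey := key_min d hddiff lam2 Ψ hΨbot hΨconv hΨsc α' β' C' hβ' A'
    (z (k+1)) hΨzT hmin' w
  rw [← hrepψ (z (k+1)), ← hrepψ w, hmod'] at hkey
  have hqle : q (k+1) w ≤ ψ (k+1) w := by
    calc q (k+1) w = ((c (k+1) * breg d w (z (k+1)) : ℝ) : EReal) + ψ (k+1) (z (k+1)) :=
          hq k w
    _ = ψ (k+1) (z (k+1)) + ((c (k+1) * breg d w (z (k+1)) : ℝ) : EReal) := add_comm _ _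
    _ ≤ ψ (k+1) w := hkey
  have hell : ellf d f lam1 w (u (k+1)) ≤ f w := by
    have h := hfsc (u (k+1)) (fderiv ℝ f (u (k+1)))
      (fun x => grad_ineq f hfconv hfdiff (u (k+1)) x) w
    simpa [ellf] using h
  have hqk : q k w = ((α * d w + A w + C + β * W : ℝ) : EReal) := by
    rw [hrep w, hW]; norm_cast
  have hψw2 : ψ (k+1) w = (((1 - a (k+1)) * (α * d w + A w + C + β * W)
      + a (k+1) * (ellf d f lam1 w (u (k+1)) + W) : ℝ) : EReal) := by
    rw [hψ k w, hqk, hW]; norm_cast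
  have hqQ : q (k+1) w = ((c (k+1) * breg d w (z (k+1)) + M : ℝ) : EReal) := by
    rw [hq k w, hM]; norm_cast
  have hQle : c (k+1) * breg d w (z (k+1)) + M
      ≤ (1 - a (k+1)) * (α * d w + A w + C + β * W)
        + a (k+1) * (ellf d f lam1 w (u (k+1)) + W) := by
    have h := hqle
    rw [hqQ, hψw2] at h
    exact_mod_cast h
  rw [hqQ, hqk, hW]
  have hprod : 0 ≤ a (k+1) * (f w - ellf d f lam1 w (u (k+1))) :=
    mul_nonneg ha0.le (by linarith)
  have hfinal : c (k+1) * breg d w (z (k+1)) + M - (f w + W)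
      ≤ (1 - a (k+1)) * ((α * d w + A w + C + β * W) - (f w + W)) := by nlinarith
  exact_mod_cast hfinal
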